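/- With the Lorentz matrix L ∈ 𝕄_{3×3} whose (k,j) entry is [δ_{kj} + (γ−1)α_k α_j]e − [βγ α_k α_j]i, and the event vector x⃗ ∈ 𝕄³ with components x_k e + α_k c t i (where (x₁,x₂,x₃) ∈ ℝ³ is the spatial position and t ∈ ℝ the time), the transformed vector x⃗' := L · x⃗ has components x'_k e + α_k c t' i, where x'_k = x_k + (γ−1)(α·x)α_k − βγ c t α_k and c t' = γ(c t − β (α·x)); i.e. L · x⃗ is consistent with the usual Lorentz transformation. -/

import Mathlib

/-- The pseudo-complex algebra 𝕄 = ℝ² with multiplication (a,b)(c,d) = (ac−bd, ad−bc). -/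
def Mmul (x y : ℝ × ℝ) : ℝ × ℝ := (x.1 * y.1 - x.2 * y.2, x.1 * y.2 - x.2 * y.1)

/-- Conjugation x* := xe = (a, −b). -/
def Mconj (x : ℝ × ℝ) : ℝ × ℝ := (x.1, -x.2)

/-- Action of a 3×3 𝕄-matrix on a vector in 𝕄³: (A · x)_k := Σ_j (a_{kj})* x_j. -/
def MmatVec (A : Matrix (Fin 3) (Fin 3) (ℝ × ℝ)) (x : Fin 3 → ℝ × ℝ) :
    Fin 3 → ℝ × ℝ :=
  fun k => ∑ j : Fin 3, Mmul (Mconj (A k j)) (x j)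

/-- The 𝕄-Lorentz transform L·x⃗ of the event vector x⃗ (components x_k e + α_k c t i)
is consistent with the usual Lorentz transformation: its components are
x'_k e + α_k c t' i with x'_k = x_k + (γ−1)(α·x)α_k − βγct α_k and
ct' = γ(ct − β(α·x)). -/
theorem M_lorentz_event (c : ℝ) (hc : 0 < c) (v : Fin 3 → ℝ) (hv : v ≠ 0)
    (hvc : Real.sqrt (∑ k, v k ^ 2) < c)
    (α : Fin 3 → ℝ) (hα : ∀ k, α k = v k / Real.sqrt (∑ m, v m ^ 2))
    (β γ : ℝ) (hβ : β = Real.sqrt (∑ k, v k ^ 2) / c)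
    (hγ : γ = 1 / Real.sqrt (1 - β ^ 2))
    (L : Matrix (Fin 3) (Fin 3) (ℝ × ℝ))
    (hL : ∀ k j, L k j =
      ((if k = j then (1 : ℝ) else 0) + (γ - 1) * α k * α j, -(β * γ * α k * α j)))
    (x : Fin 3 → ℝ) (t : ℝ) (xv : Fin 3 → ℝ × ℝ)
    (hxv : ∀ k, xv k = (x k, α k * (c * t))) :
    ∀ k, MmatVec L xv k =
      (x k + (γ - 1) * (∑ j, α j * x j) * α k - β * γ * (c * t) * α k,
        α k * (γ * (c * t - β * ∑ j, α j * x j))) := by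
  have hs : 0 < ∑ k, v k ^ 2 := by
    obtain ⟨k, hk⟩ : ∃ k, v k ≠ 0 := Function.ne_iff.mp hv
    exact Finset.sum_pos' (fun i _ => sq_nonneg _)
      ⟨k, Finset.mem_univ k, by positivity⟩
  have hsq : Real.sqrt (∑ k, v k ^ 2) ^ 2 = ∑ k, v k ^ 2 := Real.sq_sqrt hs.le
  have hspos : 0 < Real.sqrt (∑ k, v k ^ 2) := Real.sqrt_pos.mpr hs
  have hnorm : α 0 * α 0 + α 1 * α 1 + α 2 * α 2 = 1 := by
    simp only [hα]
    field_simp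
    rw [← hsq]; ring_nf
    rw [Fin.sum_univ_three] at hsq ⊢
    nlinarith [hsq, Real.sq_sqrt (sq_nonneg (Real.sqrt (v 0 ^ 2 + v 1 ^ 2 + v 2 ^ 2)))]
  intro k
  simp only [MmatVec, Mmul, Mconj, hL, hxv, Fin.sum_univ_three, Prod.mk.injEq, Prod.ext_iff]
  fin_cases k <;> simp <;>
    constructor
  · linear_combination (-(β * γ * (c * t) * α 0)) * hnorm
  · linear_combination ((γ - 1) * (c * t) * α 0) * hnorm
  · linear_combination (-(β * γ * (c * t) * α 1)) * hnorm
  · linear_combination ((γ - 1) * (c * t) * α 1) * hnorm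
  · linear_combination (-(β * γ * (c * t) * α 2)) * hnorm
  · linear_combination ((γ - 1) * (c * t) * α 2) * hnorm
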